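/- Let (χ_k)_{k≥1} be a sequence of mutually independent real-valued random variables on a probability space, each with zero mean and positive finite variance (E χ_k = 0 and 0 < E χ_k² < ∞). If ∑_{k≥1} E χ_k² = +∞, then the ratio (∑_{k=1}^N χ_k)/(∑_{k=1}^N E χ_k²) converges to 0 almost surely as N → ∞. -/

import Mathlib

open MeasureTheory ProbabilityTheory Filter
open Topology

/-- Kronecker-type lemma. -/
lemma kron_aux {v x : ℕ → ℝ} (hv : ∀ k, 0 < v k)
    (hdiv : Tendsto (fun N => ∑ k ∈ Finset.range N, v k) atTop atTop) {l : ℝ}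
    (hx : Tendsto (fun N => ∑ k ∈ Finset.range N,
      x k / (∑ j ∈ Finset.range (k+1), v j)) atTop (𝓝 l)) :
    Tendsto (fun N => (∑ k ∈ Finset.range N, x k) / (∑ k ∈ Finset.range N, v k))
      atTop (𝓝 0) := by
  set S : ℕ → ℝ := fun N => ∑ k ∈ Finset.range N, v k with hSdef
  set A : ℕ → ℝ := fun N => ∑ k ∈ Finset.range N, x k / (∑ j ∈ Finset.range (k+1), v j)
    with hAdef
  have hSpos : ∀ N, 0 < S (N+1) := fun N =>
    Finset.sum_pos (fun i _ => hv i) Finset.nonempty_range_add_one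
  have key : ∀ N, ∑ k ∈ Finset.range N, x k
      = S N * A N - ∑ j ∈ Finset.range N, v j * A j := by
    intro N
    induction N with
    | zero => simp [hAdef, hSdef]
    | succ N ih =>
      have ht : S (N+1) ≠ 0 := (hSpos N).ne'
      have hAs : A (N+1) = A N + x N / S (N+1) := Finset.sum_range_succ _ _
      have hSs : S (N+1) = S N + v N := Finset.sum_range_succ _ _
      have h1 : S (N+1) * (x N / S (N+1)) = x N := mul_div_cancel₀ _ ht
      rw [Finset.sum_range_succ, Finset.sum_range_succ (fun j => v j * A j), ih, hAs,
        mul_add, h1, hSs]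
      ring
  have hA0 : Tendsto (fun N => A N - l) atTop (𝓝 0) := by
    simpa using hx.sub_const l
  have hlittle : (fun j => v j * (A j - l)) =o[atTop] v := by
    rw [Asymptotics.isLittleO_iff]
    intro c hc
    filter_upwards [Metric.tendsto_nhds.mp hA0 c hc] with j hj
    rw [Real.dist_eq, sub_zero] at hj
    rw [Real.norm_eq_abs, Real.norm_eq_abs, abs_mul, abs_of_pos (hv j)]
    calc v j * |A j - l| ≤ v j * c := mul_le_mul_of_nonneg_left hj.le (hv j).le
      _ = c * v j := mul_comm _ _
  have hsumo : (fun N => ∑ j ∈ Finset.range N, v j * (A j - l)) =o[atTop]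
      (fun N => ∑ j ∈ Finset.range N, v j) :=
    hlittle.sum_range (fun i => (hv i).le) hdiv
  have hBdiv : Tendsto (fun N => (∑ j ∈ Finset.range N, v j * (A j - l)) / S N)
      atTop (𝓝 0) := hsumo.tendsto_div_nhds_zero
  have hfinal : Tendsto
      (fun N => (A N - l) - (∑ j ∈ Finset.range N, v j * (A j - l)) / S N)
      atTop (𝓝 0) := by
    simpa using hA0.sub hBdiv
  apply hfinal.congr'
  filter_upwards [eventually_ge_atTop 1] with N hN
  obtain ⟨M, rfl⟩ := Nat.exists_eq_add_of_le hN
  have hSN : 0 < S (1 + M) := by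
    rw [add_comm] at *
    exact hSpos M
  have hveq : ∑ j ∈ Finset.range (1+M), v j * (A j - l)
      = (∑ j ∈ Finset.range (1+M), v j * A j) - l * S (1+M) := by
    simp_rw [mul_sub]
    rw [Finset.sum_sub_distrib]
    congr 1
    rw [← Finset.sum_mul, mul_comm]
  rw [key (1+M), hveq]
  have hS' : (∑ k ∈ Finset.range (1+M), v k) = S (1+M) := rfl
  rw [hS']
  field_simp
  ring

open MeasureTheory ProbabilityTheory Filter Topology


/-- A law of large numbers: for independent, zero-mean, square-integrable
random variables `χ_k` with positive variances whose total variance diverges,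
`(∑_{k<N} χ_k) / (∑_{k<N} E χ_k²) → 0` almost surely. -/
theorem stmt_7 {Ω : Type*} [MeasureSpace Ω] [IsProbabilityMeasure (ℙ : Measure Ω)]
    (χ : ℕ → Ω → ℝ)
    (hmeas : ∀ k, Measurable (χ k))
    (hindep : iIndepFun χ ℙ)
    (hL2 : ∀ k, MemLp (χ k) 2 ℙ)
    (hmean : ∀ k, ∫ ω, χ k ω ∂ℙ = 0)
    (hvarpos : ∀ k, 0 < ∫ ω, (χ k ω) ^ 2 ∂ℙ)
    (hdiv : Tendsto (fun N => ∑ k ∈ Finset.range N, ∫ ω, (χ k ω) ^ 2 ∂ℙ)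
      atTop atTop) :
    ∀ᵐ ω ∂ℙ, Tendsto
      (fun N => (∑ k ∈ Finset.range N, χ k ω) /
        (∑ k ∈ Finset.range N, ∫ ω', (χ k ω') ^ 2 ∂ℙ))
      atTop (nhds 0) := by
  classical
  set v : ℕ → ℝ := fun k => ∫ ω, (χ k ω) ^ 2 ∂ℙ with hvdef
  set S : ℕ → ℝ := fun N => ∑ k ∈ Finset.range N, v k with hSdef
  have hvpos : ∀ k, 0 < v k := hvarpos
  have hSpos : ∀ N, 0 < S (N+1) := fun N =>
    Finset.sum_pos (fun i _ => hvpos i) Finset.nonempty_range_add_one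
  have hSsucc : ∀ N, S (N+1) = S N + v N := fun N => Finset.sum_range_succ _ _
  -- the normalized variables
  set Y : ℕ → Ω → ℝ := fun k ω => χ k ω / S (k+1) with hYdef
  have hYsmul : ∀ k, Y k = (S (k+1))⁻¹ • χ k := by
    intro k; funext ω; simp [hYdef, div_eq_inv_mul]
  have hY2 : ∀ k, MemLp (Y k) 2 ℙ := by
    intro k; rw [hYsmul k]; exact (hL2 k).const_smul _
  have hYint : ∀ k, Integrable (Y k) ℙ := fun k => (hY2 k).integrable one_le_two
  have hYmean : ∀ k, ∫ ω, Y k ω ∂ℙ = 0 := by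
    intro k
    simp only [hYdef]
    rw [integral_div, hmean k, zero_div]
  have hSM : ∀ k, StronglyMeasurable (χ k) := fun k => (hmeas k).stronglyMeasurable
  set ℱ := Filtration.natural χ hSM with hFdef
  set f : ℕ → Ω → ℝ := fun n ω => ∑ k ∈ Finset.range (n+1), Y k ω with hfdef
  have hf_eq : ∀ n, f n = ∑ k ∈ Finset.range (n+1), Y k := by
    intro n; funext ω; simp [hfdef]
  have hadp : StronglyAdapted ℱ f := by
    intro n
    rw [hf_eq n]
    apply Finset.stronglyMeasurable_sum
    intro k hk
    have hkn : k ≤ n := Nat.lt_succ_iff.mp (Finset.mem_range.mp hk)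
    rw [hYsmul k]
    exact ((Filtration.stronglyAdapted_natural hSM k).mono (ℱ.mono hkn)).const_smul _
  have hint : ∀ n, Integrable (f n) ℙ := by
    intro n
    exact integrable_finset_sum _ fun k _ => hYint k
  have hmart : Martingale f ℱ ℙ := by
    apply martingale_nat hadp hint
    intro i
    have hfs : f (i+1) = f i + Y (i+1) := by
      funext ω; exact Finset.sum_range_succ _ _
    have hcond : ℙ[Y (i+1)|ℱ i] =ᵐ[ℙ] 0 := by
      rw [hYsmul (i+1)]
      refine (condExp_smul _ _ _).trans ?_
      have := hindep.condExp_natural_ae_eq_of_lt hSM (Nat.lt_succ_self i)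
      filter_upwards [this] with ω hω
      rw [← hFdef, Nat.succ_eq_add_one] at hω
      simp [hω, hmean (i+1)]
    have h1 : ℙ[f (i+1)|ℱ i] =ᵐ[ℙ] ℙ[f i|ℱ i] + ℙ[Y (i+1)|ℱ i] := by
      rw [hfs]; exact condExp_add (hint i) (hYint (i+1)) _
    have h2 : ℙ[f i|ℱ i] = f i :=
      condExp_of_stronglyMeasurable (ℱ.le i) (hadp i) (hint i)
    filter_upwards [h1, hcond] with ω hω h0
    rw [hω, Pi.add_apply, h2, h0, Pi.zero_apply, add_zero]
  -- variance bound
  have hYindep : ∀ i j, i ≠ j → IndepFun (Y i) (Y j) ℙ := by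
    intro i j hij
    exact (hindep.indepFun hij).comp (measurable_id.div_const _) (measurable_id.div_const _)
  have hvarχ : ∀ k, variance (χ k) ℙ = v k := by
    intro k
    rw [variance_of_integral_eq_zero (hmeas k).aemeasurable (hmean k)]
  have hvarY : ∀ k, variance (Y k) ℙ = v k / S (k+1) ^ 2 := by
    intro k
    rw [hYsmul k, variance_smul, hvarχ k, inv_pow]
    ring
  have hvarfn : ∀ n, variance (f n) ℙ = ∑ k ∈ Finset.range (n+1), v k / S (k+1) ^ 2 := by
    intro n
    rw [hf_eq n, IndepFun.variance_sum (fun k _ => hY2 k)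
      (fun i _ j _ hij => hYindep i j hij)]
    exact Finset.sum_congr rfl fun k _ => hvarY k
  have hb : ∀ n, ∑ k ∈ Finset.range (n+1), v k / S (k+1) ^ 2 ≤ 2 / S 1 - 1 / S (n+1) := by
    intro n
    induction n with
    | zero =>
      rw [Finset.sum_range_one]
      have h1 : S 1 = v 0 := by simp [hSdef]
      rw [h1]
      have hv0 := hvpos 0
      have : v 0 / v 0 ^ 2 = 2 / v 0 - 1 / v 0 := by
        field_simp
        ring
      exact this.le
    | succ n ih =>
      rw [Finset.sum_range_succ]
      have ha := hSpos n
      have hbpos := hSpos (n+1)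
      have hmono : S (n+1) ≤ S (n+2) := by
        rw [hSsucc (n+1)]
        linarith [hvpos (n+1)]
      have h1 : 1 / S (n+1) - 1 / S (n+2) = v (n+1) / (S (n+1) * S (n+2)) := by
        rw [div_sub_div _ _ ha.ne' hbpos.ne', one_mul, mul_one, hSsucc (n+1)]
        ring_nf
      have hstep : v (n+1) / S (n+2) ^ 2 ≤ 1 / S (n+1) - 1 / S (n+2) := by
        rw [h1, pow_two]
        exact div_le_div_of_nonneg_left (hvpos _).le (by positivity)
          (mul_le_mul_of_nonneg_right hmono hbpos.le)
      linarith [ih, hstep]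
  have hmean_fn : ∀ n, ∫ ω, f n ω ∂ℙ = 0 := by
    intro n
    simp only [hfdef]
    rw [integral_finset_sum _ fun k _ => hYint k]
    exact Finset.sum_eq_zero fun k _ => hYmean k
  have hC : (0:ℝ) ≤ 2 / S 1 := by positivity
  have hbdd : ∀ n, eLpNorm (f n) 1 ℙ ≤ ENNReal.ofReal (Real.sqrt (2 / S 1)) := by
    intro n
    have hfme : MemLp (f n) 2 ℙ := by
      rw [hf_eq n]; exact memLp_finset_sum' _ fun k _ => hY2 k
    have h2 : eLpNorm (f n) 2 ℙ = evariance (f n) ℙ ^ (1/2 : ℝ) := by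
      rw [eLpNorm_eq_lintegral_rpow_enorm_toReal two_ne_zero ENNReal.ofNat_ne_top, evariance]
      simp only [ENNReal.toReal_ofNat, one_div]
      congr 1
      refine lintegral_congr fun ω => ?_
      rw [hmean_fn n, sub_zero, ENNReal.rpow_two]
    have h3 : eLpNorm (f n) 2 ℙ ≤ ENNReal.ofReal (Real.sqrt (2 / S 1)) := by
      rw [h2, Real.sqrt_eq_rpow,
        ← ENNReal.ofReal_rpow_of_nonneg hC (by norm_num : (0:ℝ) ≤ 1/2)]
      apply ENNReal.rpow_le_rpow _ (by norm_num)
      rw [← hfme.ofReal_variance_eq]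
      apply ENNReal.ofReal_le_ofReal
      calc variance (f n) ℙ = ∑ k ∈ Finset.range (n+1), v k / S (k+1) ^ 2 := hvarfn n
        _ ≤ 2 / S 1 - 1 / S (n+1) := hb n
        _ ≤ 2 / S 1 := by linarith [one_div_pos.mpr (hSpos n)]
    exact le_trans (eLpNorm_le_eLpNorm_of_exponent_le one_le_two
      (hint n).aestronglyMeasurable) h3
  have hconv := hmart.submartingale.exists_ae_tendsto_of_bdd
    (R := (Real.sqrt (2 / S 1)).toNNReal)
    (fun n => by simpa [ENNReal.ofReal] using hbdd n)
  filter_upwards [hconv] with ω hω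
  obtain ⟨c, hc⟩ := hω
  have hA : Tendsto (fun N => ∑ k ∈ Finset.range N,
      χ k ω / (∑ j ∈ Finset.range (k+1), v j)) atTop (𝓝 c) := by
    apply (tendsto_add_atTop_iff_nat 1).mp
    refine hc.congr fun n => ?_
    simp [hfdef, hYdef, hSdef]
  exact kron_aux hvpos hdiv hA
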